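/- Let λ ≤ 0, 0 < s₁ < s₂ < 2, and suppose u_λ ∈ X satisfies A(u_λ) = B(u_λ) + λC(u_λ) with B(u_λ) > 0 (i.e., u_λ lies on the Nehari manifold of I_λ). Set t₀ = (A(u_λ)/B(u_λ))^{1/(4−2s₁)}. Then I_λ(u_λ) ≥ I_λ(t₀u_λ) ≥ I_0(t₀u_λ) = ((2−s₁)/(6−2s₁)) · A(u_λ)^{(3−s₁)/(2−s₁)} / B(u_λ)^{1/(2−s₁)} ≥ ((2−s₁)/(6−2s₁)) S₁^{(3−s₁)/(2−s₁)}, where S₁ is the best constant with B(u)^{1/(3−s₁)} ≤ S₁^{-1}A(u). -/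

import Mathlib

lemma aux_young {x p : ℝ} (hx : 0 ≤ x) (hp : 1 < p) :
    x ≤ x ^ p / p + (1 - 1 / p) := by
  have hp0 : (0:ℝ) < p := by linarith
  have hpq : p.HolderConjugate (p / (p - 1)) := (Real.holderConjugate_iff_eq_conjExponent hp).2 rfl
  have h := Real.young_inequality_of_nonneg hx (zero_le_one) hpq
  rw [Real.one_rpow, mul_one] at h
  have : (1:ℝ) / (p / (p - 1)) = 1 - 1/p := by field_simp
  calc x ≤ x ^ p / p + 1 / (p / (p-1)) := by
        simpa [one_div] using h
    _ = x ^ p / p + (1 - 1/p) := by rw [this]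

/-- monotonicity in q of (t^q - 1)/q for t ≥ 0 -/
lemma aux_mono {t a b : ℝ} (ht : 0 ≤ t) (hb : 0 < b) (hba : b < a) :
    (t ^ b - 1) / b ≤ (t ^ a - 1) / a := by
  have ha : 0 < a := lt_trans hb hba
  have hp : 1 < a / b := (one_lt_div hb).mpr hba
  have h := aux_young (Real.rpow_nonneg ht b) hp
  have hab : (t ^ b) ^ (a / b) = t ^ a := by
    rw [← Real.rpow_mul ht]
    congr 1
    field_simp
  rw [hab] at h
  rw [div_le_div_iff₀ hb ha]
  have h1 : (1:ℝ) - 1/(a/b) = 1 - b/a := by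
    congr 1
    rw [one_div_div]
  rw [h1] at h
  have h2 : t ^ a / (a / b) = t ^ a * b / a := by
    field_simp
  rw [h2] at h
  have := mul_le_mul_of_nonneg_right h ha.le
  calc (t ^ b - 1) * a = t ^ b * a - a := by ring
    _ ≤ (t ^ a * b / a + (1 - b/a)) * a - a := by nlinarith
    _ = (t ^ a - 1) * b := by field_simp; ring


/-- chained comparison: let `λ ≤ 0`, `0 < s₁ < s₂ < 2`, `A > 0`, `B > 0`,
`C ≥ 0`, `S₁ > 0` with the Nehari identity `A = B + λC` and the Sobolev bound
`B^{1/(3−s₁)} ≤ S₁⁻¹A`.  With `t₀ = (A/B)^{1/(4−2s₁)}`: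
`I_λ(u_λ) ≥ I_λ(t₀u_λ) ≥ I_0(t₀u_λ) = ((2−s₁)/(6−2s₁))A^{(3−s₁)/(2−s₁)}/B^{1/(2−s₁)}
≥ ((2−s₁)/(6−2s₁))S₁^{(3−s₁)/(2−s₁)}`. -/
theorem stmt17 (s₁ s₂ lam A B C S₁ : ℝ) (hs₁ : 0 < s₁) (h12 : s₁ < s₂) (hs₂ : s₂ < 2)
    (hlam : lam ≤ 0) (hA : 0 < A) (hB : 0 < B) (hC : 0 ≤ C) (hS₁ : 0 < S₁)
    (hnehari : A = B + lam * C)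
    (hSob : B ^ (1 / (3 - s₁)) ≤ S₁⁻¹ * A)
    (t₀ : ℝ) (ht₀ : t₀ = (A / B) ^ (1 / (4 - 2 * s₁))) :
    A / 2 - B / (6 - 2 * s₁) - lam * C / (6 - 2 * s₂)
        ≥ t₀ ^ 2 * A / 2 - t₀ ^ (6 - 2 * s₁) * B / (6 - 2 * s₁)
          - lam * t₀ ^ (6 - 2 * s₂) * C / (6 - 2 * s₂) ∧
    t₀ ^ 2 * A / 2 - t₀ ^ (6 - 2 * s₁) * B / (6 - 2 * s₁)
        - lam * t₀ ^ (6 - 2 * s₂) * C / (6 - 2 * s₂)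
      ≥ t₀ ^ 2 * A / 2 - t₀ ^ (6 - 2 * s₁) * B / (6 - 2 * s₁) ∧
    t₀ ^ 2 * A / 2 - t₀ ^ (6 - 2 * s₁) * B / (6 - 2 * s₁)
      = ((2 - s₁) / (6 - 2 * s₁)) * A ^ ((3 - s₁) / (2 - s₁)) / B ^ (1 / (2 - s₁)) ∧
    ((2 - s₁) / (6 - 2 * s₁)) * A ^ ((3 - s₁) / (2 - s₁)) / B ^ (1 / (2 - s₁))
      ≥ ((2 - s₁) / (6 - 2 * s₁)) * S₁ ^ ((3 - s₁) / (2 - s₁)) := by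
  have h2s : (0:ℝ) < 2 - s₁ := by linarith
  have h4s : (0:ℝ) < 4 - 2 * s₁ := by linarith
  have h6s₁ : (0:ℝ) < 6 - 2 * s₁ := by linarith
  have h6s₂ : (0:ℝ) < 6 - 2 * s₂ := by linarith
  have hr : (0:ℝ) < A / B := div_pos hA hB
  have ht₀pos : 0 < t₀ := ht₀ ▸ Real.rpow_pos_of_pos hr _
  have htn : t₀ ^ 2 = t₀ ^ (2:ℝ) := by
    rw [show (2:ℝ) = ((2:ℕ):ℝ) by norm_num, Real.rpow_natCast]
  -- rewriting of powers of t₀ as powers of A/B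
  have hpow : ∀ x : ℝ, t₀ ^ x = (A / B) ^ (x / (4 - 2 * s₁)) := by
    intro x
    rw [ht₀, ← Real.rpow_mul hr.le]
    congr 1
    field_simp
  refine ⟨?_, ?_, ?_, ?_⟩
  · -- part 1
    have hlC : lam * C ≤ 0 := mul_nonpos_iff.mpr (Or.inr ⟨hlam, hC⟩)
    have hb2 : (2:ℝ) < 6 - 2 * s₂ := by linarith
    have hba : (6 - 2*s₂ : ℝ) < 6 - 2*s₁ := by linarith
    have g2b := aux_mono ht₀pos.le (by norm_num : (0:ℝ) < 2) hb2
    have gba := aux_mono ht₀pos.le (by linarith : (0:ℝ) < 6 - 2*s₂) hba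
    rw [← htn] at g2b
    -- φ_b := (t^b - 1)/b - (t^2-1)/2 ≥ 0, φ_a ≥ φ_b
    set φb := (t₀ ^ (6 - 2*s₂) - 1)/(6 - 2*s₂) - (t₀^2 - 1)/2 with hφb
    set φa := (t₀ ^ (6 - 2*s₁) - 1)/(6 - 2*s₁) - (t₀^2 - 1)/2 with hφa
    have hφb0 : 0 ≤ φb := by simp only [hφb]; linarith
    have hφab : φb ≤ φa := by simp only [hφa, hφb]; linarith
    have key : 0 ≤ B * φa + lam * C * φb := by
      have h1 : 0 ≤ B * (φa - φb) := mul_nonneg hB.le (by linarith)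
      have h2 : 0 ≤ A * φb := mul_nonneg hA.le hφb0
      nlinarith
    have e1 : A / 2 - B / (6 - 2 * s₁) - lam * C / (6 - 2 * s₂)
        - (t₀ ^ 2 * A / 2 - t₀ ^ (6 - 2 * s₁) * B / (6 - 2 * s₁)
          - lam * t₀ ^ (6 - 2 * s₂) * C / (6 - 2 * s₂))
        = B * φa + lam * C * φb := by
      simp only [hφa, hφb]
      rw [hnehari]
      field_simp
      ring
    have := key
    rw [← e1] at this
    linarith
  · -- part 2
    have h0 : lam * t₀ ^ (6 - 2 * s₂) * C / (6 - 2 * s₂) ≤ 0 := by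
      apply div_nonpos_of_nonpos_of_nonneg _ h6s₂.le
      have h1 : 0 ≤ t₀ ^ (6 - 2*s₂) * C :=
        mul_nonneg (Real.rpow_pos_of_pos ht₀pos _).le hC
      have := mul_nonneg (neg_nonneg.mpr hlam) h1
      nlinarith
    linarith
  · -- part 3: computation
    have e2 : t₀ ^ 2 = (A/B) ^ ((2:ℝ)/(4 - 2*s₁)) := by rw [htn, hpow]
    have e3 : t₀ ^ (6 - 2*s₁) = (A/B) ^ ((6 - 2*s₁)/(4 - 2*s₁)) := hpow _
    have q1 : (2:ℝ)/(4 - 2*s₁) = 1/(2 - s₁) := by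
      rw [div_eq_div_iff h4s.ne' h2s.ne']; ring
    have q2 : (6 - 2*s₁)/(4 - 2*s₁) = (3 - s₁)/(2 - s₁) := by
      rw [div_eq_div_iff h4s.ne' h2s.ne']; ring
    rw [e2, e3, q1, q2, Real.div_rpow hA.le hB.le, Real.div_rpow hA.le hB.le]
    have hApos : ∀ x : ℝ, (0:ℝ) < A ^ x := fun x => Real.rpow_pos_of_pos hA x
    have hBpos : ∀ x : ℝ, (0:ℝ) < B ^ x := fun x => Real.rpow_pos_of_pos hB x
    have k1 : A ^ (1/(2 - s₁)) * A = A ^ ((3 - s₁)/(2 - s₁)) := by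
      nth_rewrite 2 [← Real.rpow_one A]
      rw [← Real.rpow_add hA]
      congr 1
      field_simp
      ring
    have k2 : B ^ ((3 - s₁)/(2 - s₁)) = B ^ (1/(2-s₁)) * B := by
      nth_rewrite 3 [← Real.rpow_one B]
      rw [← Real.rpow_add hB]
      congr 1
      field_simp
      ring
    rw [k2]
    rw [div_mul_eq_mul_div, div_mul_eq_mul_div, k1]
    rw [div_div, div_div]
    rw [div_sub_div _ _ (by positivity) (by positivity)]
    rw [div_eq_div_iff (by positivity) (by positivity)]
    have hd : B ^ ((3-s₁)/(2-s₁)) * B = B ^ (1/(2-s₁)) * B * B := by rw [k2]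
    field_simp
    rw [mul_div_assoc, div_self (ne_of_gt (by linarith : (0:ℝ) < 6 - s₁ * 2))]
    ring
  · -- part 4
    have hBp : (0:ℝ) < B ^ (1/(3 - s₁)) := Real.rpow_pos_of_pos hB _
    have hS : S₁ ≤ A / B ^ (1/(3 - s₁)) := by
      rw [le_div_iff₀ hBp]
      calc S₁ * B ^ (1/(3-s₁)) ≤ S₁ * (S₁⁻¹ * A) :=
            mul_le_mul_of_nonneg_left hSob hS₁.le
        _ = A := by field_simp
    have he : (0:ℝ) ≤ (3 - s₁)/(2 - s₁) := div_nonneg (by linarith) (by linarith)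
    have h1 := Real.rpow_le_rpow hS₁.le hS he
    have h2 : (A / B ^ (1/(3 - s₁))) ^ ((3 - s₁)/(2 - s₁))
        = A ^ ((3 - s₁)/(2 - s₁)) / B ^ (1/(2 - s₁)) := by
      rw [Real.div_rpow hA.le hBp.le, ← Real.rpow_mul hB.le]
      congr 2
      field_simp
      rw [div_self (ne_of_gt (by linarith : (0:ℝ) < 3 - s₁))]
    rw [h2] at h1
    have hc : (0:ℝ) ≤ (2 - s₁)/(6 - 2*s₁) := div_nonneg (by linarith) (by linarith)
    have := mul_le_mul_of_nonneg_left h1 hc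
    calc ((2 - s₁) / (6 - 2 * s₁)) * A ^ ((3 - s₁) / (2 - s₁)) / B ^ (1 / (2 - s₁))
        = ((2 - s₁) / (6 - 2 * s₁)) * (A ^ ((3 - s₁) / (2 - s₁)) / B ^ (1 / (2 - s₁))) := by
          ring
      _ ≥ ((2 - s₁) / (6 - 2 * s₁)) * S₁ ^ ((3 - s₁) / (2 - s₁)) := this
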